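/- The polynomial ∏_{1≤i<j≤n} (k_j − k_i)/(j−i) equals the determinant of the n×n matrix whose (i,j) entry is the binomial coefficient C(k_i, j−1) = k_i(k_i−1)⋯(k_i−j+2)/(j−1)!. -/

import Mathlib

open Finset

lemma pair_prod_eq_Ioi {M : Type*} [CommMonoid M] (n : ℕ) (f : Fin n → Fin n → M) :
    ∏ p ∈ Finset.univ.filter (fun p : Fin n × Fin n => p.1 < p.2), f p.1 p.2
      = ∏ i : Fin n, ∏ j ∈ Ioi i, f i j := by
  rw [Finset.prod_filter]
  rw [Fintype.prod_prod_type]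
  refine Finset.prod_congr rfl fun i _ => ?_
  rw [← Finset.prod_filter]
  congr 1
  ext j
  simp

lemma pair_prod_eq_Iio {M : Type*} [CommMonoid M] (n : ℕ) (f : Fin n → Fin n → M) :
    ∏ p ∈ Finset.univ.filter (fun p : Fin n × Fin n => p.1 < p.2), f p.1 p.2
      = ∏ j : Fin n, ∏ i ∈ Iio j, f i j := by
  rw [Finset.prod_filter, Fintype.prod_prod_type, Finset.prod_comm]
  refine Finset.prod_congr rfl fun j _ => ?_
  rw [← Finset.prod_filter]
  congr 1
  ext i
  simp

lemma prod_range_sub_eq_factorial (m : ℕ) :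
    ∏ t ∈ Finset.range m, ((m : ℚ) - t) = (m.factorial : ℚ) := by
  induction m with
  | zero => simp
  | succ m ih =>
    rw [Finset.prod_range_succ']
    have h1 : ∀ t ∈ Finset.range m, (((m+1 : ℕ) : ℚ) - ((t + 1 : ℕ) : ℚ)) = ((m:ℚ) - t) := by
      intro t _; push_cast; ring
    rw [Finset.prod_congr rfl h1, ih, Nat.factorial_succ]
    push_cast
    ring

lemma prod_Iio_sub_eq_factorial {n : ℕ} (j : Fin n) :
    ∏ i ∈ Iio j, (((j : ℕ) : ℚ) - ((i : ℕ) : ℚ)) = ((j : ℕ).factorial : ℚ) := by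
  rw [← prod_range_sub_eq_factorial (j : ℕ)]
  refine Finset.prod_nbij (fun i => (i : ℕ)) ?_ ?_ ?_ ?_
  · intro i hi; simp only [Finset.mem_Iio] at hi; simpa using hi
  · intro a _ b _ h; exact Fin.val_injective h
  · intro t ht
    have ht' : t < (j : ℕ) := by simpa using ht
    exact ⟨⟨t, lt_trans ht' j.isLt⟩, Finset.mem_Iio.mpr ht', rfl⟩
  · intro i _; rfl

theorem vandermonde_as_binomial_determinant (n : ℕ) (k : Fin n → ℚ) :
    ∏ p ∈ Finset.univ.filter (fun p : Fin n × Fin n => p.1 < p.2),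
        ((k p.2 - k p.1) / (((p.2 : ℕ) : ℚ) - ((p.1 : ℕ) : ℚ)))
      = Matrix.det (Matrix.of fun i j : Fin n =>
          (∏ t ∈ Finset.range (j : ℕ), (k i - t)) / ((j : ℕ).factorial : ℚ)) := by
  -- Rewrite RHS entries as (1/j!) * eval of monic polynomial
  have hrhs : (Matrix.of fun i j : Fin n =>
        (∏ t ∈ Finset.range (j : ℕ), (k i - t)) / ((j : ℕ).factorial : ℚ))
      = Matrix.of fun i j : Fin n =>
        (((j : ℕ).factorial : ℚ))⁻¹ *
          ((∏ t ∈ Finset.range (j : ℕ), (Polynomial.X - Polynomial.C (t : ℚ))).eval (k i)) := by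
    ext i j
    simp [Polynomial.eval_prod, div_eq_inv_mul]
  rw [hrhs]
  rw [Matrix.det_mul_row (fun j : Fin n => (((j : ℕ).factorial : ℚ))⁻¹)
    (A := fun i j : Fin n => Polynomial.eval (k i) (∏ t ∈ Finset.range (j : ℕ), (Polynomial.X - Polynomial.C (t : ℚ))))]
  have hdet : (Matrix.det fun i j : Fin n =>
        Polynomial.eval (k i) (∏ t ∈ Finset.range (j : ℕ), (Polynomial.X - Polynomial.C (t : ℚ))))
      = (Matrix.vandermonde k).det :=
    (Matrix.det_eval_matrixOfPolynomials_eq_det_vandermonde k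
      (fun j : Fin n => ∏ t ∈ Finset.range (j : ℕ), (Polynomial.X - Polynomial.C (t : ℚ)))
      (fun j => by
        rw [Polynomial.natDegree_prod _ _ (fun t _ => Polynomial.X_sub_C_ne_zero _)]
        simp only [Polynomial.natDegree_X_sub_C]
        simp)
      (fun j => Polynomial.monic_prod_of_monic _ _ (fun t _ => Polynomial.monic_X_sub_C _))).symm
  rw [hdet]
  rw [Matrix.det_vandermonde]
  rw [show (∏ p ∈ Finset.univ.filter (fun p : Fin n × Fin n => p.1 < p.2),
        ((k p.2 - k p.1) / (((p.2 : ℕ) : ℚ) - ((p.1 : ℕ) : ℚ))))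
      = (∏ p ∈ Finset.univ.filter (fun p : Fin n × Fin n => p.1 < p.2), (k p.2 - k p.1))
        / (∏ p ∈ Finset.univ.filter (fun p : Fin n × Fin n => p.1 < p.2),
            (((p.2 : ℕ) : ℚ) - ((p.1 : ℕ) : ℚ))) from Finset.prod_div_distrib _ _]
  rw [pair_prod_eq_Ioi n (fun i j => k j - k i),
      pair_prod_eq_Iio n (fun i j => (((j : ℕ) : ℚ) - ((i : ℕ) : ℚ)))]
  rw [Finset.prod_congr rfl (fun j (_ : j ∈ Finset.univ) => prod_Iio_sub_eq_factorial j)]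
  rw [div_eq_mul_inv, ← Finset.prod_inv_distrib, mul_comm]
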